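/- If G is a k-extendable graph on ν ≥ 2k+2 vertices, then G is m-extendable for every integer m with 0 ≤ m ≤ k. -/

import Mathlib

open SimpleGraph

/-- `G` has a matching with exactly `k` edges. -/
def HasMatchingOfSize {V : Type*} (G : SimpleGraph V) (k : ℕ) : Prop :=
  ∃ M : G.Subgraph, M.IsMatching ∧ M.edgeSet.ncard = k

/-- `G` is `k`-extendable: connected, has a matching of size `k`, and every
matching of size `k` extends to a perfect matching. -/
def Extendable {V : Type*} (G : SimpleGraph V) (k : ℕ) : Prop :=
  G.Connected ∧ HasMatchingOfSize G k ∧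
    ∀ M : G.Subgraph, M.IsMatching → M.edgeSet.ncard = k →
      ∃ M' : G.Subgraph, M ≤ M' ∧ M'.IsPerfectMatching

/-- `G` is `n`-factor-critical: deleting any `n` vertices leaves a graph with
a perfect matching. -/
def FactorCritical {V : Type*} [Fintype V] (G : SimpleGraph V) (n : ℕ) : Prop :=
  ∀ S : Finset V, S.card = n →
    ∃ M : (G.induce ((↑S : Set V)ᶜ)).Subgraph, M.IsPerfectMatching

/-- `G` is `k½`-extendable: for every vertex `v`, `G - v` has a matching of
size `k`, and every matching of size `k` in `G - v` extends to a perfect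
matching of `G - v`. -/
def HalfExtendable {V : Type*} (G : SimpleGraph V) (k : ℕ) : Prop :=
  ∀ v : V,
    HasMatchingOfSize (G.induce ({v}ᶜ : Set V)) k ∧
    ∀ M : (G.induce ({v}ᶜ : Set V)).Subgraph, M.IsMatching → M.edgeSet.ncard = k →
      ∃ M' : (G.induce ({v}ᶜ : Set V)).Subgraph, M ≤ M' ∧ M'.IsPerfectMatching

namespace StmtAux

variable {V : Type*} {G : SimpleGraph V}

/-- Deleting the two endpoints of a matched edge from a matching. -/
lemma deleteVerts_matching {M : G.Subgraph} (hM : M.IsMatching) {x y : V} (hxy : M.Adj x y) :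
    (M.deleteVerts {x, y}).IsMatching ∧
    (M.deleteVerts {x, y}).verts = M.verts \ {x, y} ∧
    (M.deleteVerts {x, y}).edgeSet = M.edgeSet \ {s(x, y)} := by
  have hxv : x ∈ M.verts := M.edge_vert hxy
  have hyv : y ∈ M.verts := M.edge_vert hxy.symm
  have key : ∀ a b : V, M.Adj a b → a = x ∨ a = y → s(a, b) = s(x, y) := by
    rintro a b hab (rfl | rfl)
    · have hb : b = y := (hM hxv).unique hab hxy
      rw [hb]
    · have hb : b = x := (hM hyv).unique hab hxy.symm
      rw [hb, Sym2.eq_swap]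
  refine ⟨?_, Subgraph.deleteVerts_verts, ?_⟩
  · intro v hv
    rw [Subgraph.deleteVerts_verts, Set.mem_diff] at hv
    obtain ⟨hv1, hv2⟩ := hv
    obtain ⟨w, hw, hwu⟩ := hM hv1
    have hwxy : w ∉ ({x, y} : Set V) := by
      intro hwm
      apply hv2
      have := key w v hw.symm (by simpa using hwm)
      rw [Sym2.eq_iff] at this
      rcases this with ⟨rfl, rfl⟩ | ⟨rfl, rfl⟩
      · exact Set.mem_insert_of_mem _ rfl
      · exact Set.mem_insert _ _
    refine ⟨w, ?_, ?_⟩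
    · show (M.deleteVerts {x, y}).Adj v w
      rw [Subgraph.deleteVerts_adj]
      exact ⟨hv1, hv2, M.edge_vert hw.symm, hwxy, hw⟩
    · intro w' hw'
      have : (M.deleteVerts {x, y}).Adj v w' := hw'
      rw [Subgraph.deleteVerts_adj] at this
      exact hwu w' this.2.2.2.2
  · ext e
    induction e with
    | _ a b =>
      simp only [Subgraph.mem_edgeSet, Subgraph.deleteVerts_adj, Set.mem_diff,
        Set.mem_singleton_iff]
      constructor
      · rintro ⟨ha1, ha2, hb1, hb2, hab⟩
        refine ⟨hab, fun h => ?_⟩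
        rw [Sym2.eq_iff] at h
        rcases h with ⟨rfl, rfl⟩ | ⟨rfl, rfl⟩
        · exact ha2 (Set.mem_insert _ _)
        · exact hb2 (Set.mem_insert _ _)
      · rintro ⟨hab, hne⟩
        have ha1 := M.edge_vert hab
        have hb1 := M.edge_vert hab.symm
        have ha2 : a ∉ ({x, y} : Set V) := fun h => hne (key a b hab (by simpa using h))
        have hb2 : b ∉ ({x, y} : Set V) := fun h => by
          apply hne
          rw [Sym2.eq_swap]
          exact key b a hab.symm (by simpa using h)
        exact ⟨ha1, ha2, hb1, hb2, hab⟩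

/-- Adding an edge disjoint from a matching. -/
lemma sup_edge_matching {M : G.Subgraph} (hM : M.IsMatching) {u v : V} (huv : G.Adj u v)
    (hu : u ∉ M.verts) (hv : v ∉ M.verts) :
    (M ⊔ G.subgraphOfAdj huv).IsMatching ∧
    (M ⊔ G.subgraphOfAdj huv).verts = M.verts ∪ {u, v} ∧
    (M ⊔ G.subgraphOfAdj huv).edgeSet = M.edgeSet ∪ {s(u, v)} := by
  refine ⟨?_, by simp [Subgraph.verts_sup], by simp [Subgraph.edgeSet_sup]⟩
  apply hM.sup (Subgraph.IsMatching.subgraphOfAdj huv)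
  rw [hM.support_eq_verts, (Subgraph.IsMatching.subgraphOfAdj huv).support_eq_verts]
  simp only [subgraphOfAdj_verts]
  rw [Set.disjoint_iff_forall_ne]
  rintro a ha b hb rfl
  rcases hb with rfl | rfl
  · exact hu ha
  · exact hv ha

end StmtAux

namespace StmtAux

variable {V : Type*} {G : SimpleGraph V}

lemma matching_verts_ncard [Finite V] :
    ∀ (n : ℕ) (M : G.Subgraph), M.IsMatching → M.edgeSet.ncard = n →
    M.verts.ncard = 2 * n := by
  intro n
  induction n with
  | zero =>
    intro M hM h0
    have hve : M.verts = ∅ := by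
      rw [Set.eq_empty_iff_forall_notMem]
      intro v hv
      obtain ⟨w, hw, _⟩ := hM hv
      have : s(v, w) ∈ M.edgeSet := Subgraph.mem_edgeSet.mpr hw
      rw [Set.ncard_eq_zero, Set.eq_empty_iff_forall_notMem] at h0
      exact h0 _ this
    rw [hve]
    simp
  | succ n ih =>
    intro M hM hcard
    have hne : M.edgeSet.Nonempty := Set.nonempty_of_ncard_ne_zero (by omega)
    obtain ⟨e, he⟩ := hne
    induction e with
    | _ x y =>
      rw [Subgraph.mem_edgeSet] at he
      obtain ⟨h2m, h2v, h2e⟩ := deleteVerts_matching hM he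
      have hxy : x ≠ y := he.ne
      have hxv : x ∈ M.verts := M.edge_vert he
      have hyv : y ∈ M.verts := M.edge_vert he.symm
      have h2c : (M.deleteVerts {x, y}).edgeSet.ncard = n := by
        rw [h2e, Set.ncard_diff_singleton_of_mem (Subgraph.mem_edgeSet.mpr he), hcard]
        omega
      have h2vc := ih _ h2m h2c
      rw [h2v] at h2vc
      have hsub : ({x, y} : Set V) ⊆ M.verts := by
        rintro a (rfl | rfl)
        · exact hxv
        · exact hyv
      have hd := Set.ncard_diff hsub (Set.toFinite _)
      rw [Set.ncard_pair hxy] at hd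
      have hle : 2 ≤ M.verts.ncard := by
        have := Set.ncard_le_ncard hsub (Set.toFinite _)
        rw [Set.ncard_pair hxy] at this
        exact this
      omega

lemma walk_lemma [Finite V] {F : G.Subgraph} (hF : F.IsPerfectMatching) :
    ∀ (d : ℕ) (M : G.Subgraph), M.IsMatching → (M.edgeSet \ F.edgeSet).ncard ≤ d →
    ∀ z x : V, z ∉ M.verts → F.Adj z x → x ∈ M.verts →
    ∃ N : G.Subgraph, N.IsMatching ∧ N.edgeSet.ncard = M.edgeSet.ncard + 1 ∧
      M.verts ∪ {z} ⊆ N.verts := by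
  intro d
  induction d with
  | zero =>
    intro M hM hd z x hz hzx hx
    exfalso
    obtain ⟨y, hxy, _⟩ := hM hx
    have hxyF : s(x, y) ∉ F.edgeSet := by
      rw [Subgraph.mem_edgeSet]
      intro h
      have hyz : y = z := (hF.1 (hF.2 x)).unique h hzx.symm
      subst hyz
      exact hz (M.edge_vert hxy.symm)
    have hmem : s(x, y) ∈ M.edgeSet \ F.edgeSet := ⟨Subgraph.mem_edgeSet.mpr hxy, hxyF⟩
    have : 0 < (M.edgeSet \ F.edgeSet).ncard := (Set.ncard_pos (Set.toFinite _)).mpr ⟨_, hmem⟩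
    omega
  | succ d ih =>
    intro M hM hd z x hz hzx hx
    obtain ⟨y, hxy, _⟩ := hM hx
    have hyv : y ∈ M.verts := M.edge_vert hxy.symm
    have hxyF : s(x, y) ∉ F.edgeSet := by
      rw [Subgraph.mem_edgeSet]
      intro h
      have hyz : y = z := (hF.1 (hF.2 x)).unique h hzx.symm
      subst hyz
      exact hz hyv
    have hmem : s(x, y) ∈ M.edgeSet \ F.edgeSet := ⟨Subgraph.mem_edgeSet.mpr hxy, hxyF⟩
    have hzy : z ≠ y := fun h => hz (h ▸ hyv)
    have hzxne : z ≠ x := fun h => hz (h ▸ hx)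
    have hxyne : x ≠ y := hxy.ne
    obtain ⟨p, hyp, _⟩ := hF.1 (hF.2 y)
    have hpx : p ≠ x := by
      rintro rfl
      exact hzy ((hF.1 (hF.2 p)).unique hyp.symm hzx.symm).symm
    have hpz : p ≠ z := by
      rintro rfl
      exact hxyne ((hF.1 (hF.2 p)).unique hzx hyp.symm).symm.symm
    have hpy : p ≠ y := fun h => (hyp.adj_sub.ne (h ▸ rfl)).elim
    have hzG : G.Adj z x := hzx.adj_sub
    obtain ⟨h2m, h2v, h2e⟩ := deleteVerts_matching hM hxy
    set M₂ := M.deleteVerts {x, y} with hM₂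
    have hz2 : z ∉ M₂.verts := by rw [h2v]; exact fun h => hz h.1
    have hx2 : x ∉ M₂.verts := by rw [h2v]; exact fun h => h.2 (Set.mem_insert _ _)
    obtain ⟨h1m, h1v, h1e⟩ := sup_edge_matching h2m hzG hz2 hx2
    set M₁ := M₂ ⊔ G.subgraphOfAdj hzG with hM₁
    rw [h2v] at h1v
    rw [h2e] at h1e
    have hzxM : s(z, x) ∉ M.edgeSet \ {s(x, y)} := by
      rintro ⟨h, -⟩
      exact hz (M.edge_vert (Subgraph.mem_edgeSet.mp h))
    have h1card : M₁.edgeSet.ncard = M.edgeSet.ncard := by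
      rw [h1e, Set.union_singleton, Set.ncard_insert_of_notMem hzxM (Set.toFinite _),
        Set.ncard_diff_singleton_of_mem (Subgraph.mem_edgeSet.mpr hxy)]
      have : 0 < M.edgeSet.ncard := (Set.ncard_pos (Set.toFinite _)).mpr ⟨_, Subgraph.mem_edgeSet.mpr hxy⟩
      omega
    have hmeasure : (M₁.edgeSet \ F.edgeSet).ncard ≤ d := by
      have hset : M₁.edgeSet \ F.edgeSet = (M.edgeSet \ F.edgeSet) \ {s(x, y)} := by
        rw [h1e]
        ext f
        simp only [Set.mem_diff, Set.mem_union, Set.mem_singleton_iff]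
        constructor
        · rintro ⟨h1 | rfl, h2⟩
          · exact ⟨⟨h1.1, h2⟩, h1.2⟩
          · exact absurd (Subgraph.mem_edgeSet.mpr hzx) h2
        · rintro ⟨⟨h1, h2⟩, h3⟩
          exact ⟨Or.inl ⟨h1, h3⟩, h2⟩
      rw [hset, Set.ncard_diff_singleton_of_mem hmem]
      omega
    have hy1 : y ∉ M₁.verts := by
      rw [h1v]
      rintro (⟨-, h⟩ | (h | h))
      · exact h (Set.mem_insert_of_mem _ rfl)
      · exact hzy h.symm
      · exact hxyne h.symm
    have hsubverts : M.verts ∪ {z} ⊆ M₁.verts ∪ {y} := by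
      intro a ha
      rw [h1v]
      rcases ha with ha | rfl
      · by_cases hay : a = y
        · right; exact hay
        · by_cases hax : a = x
          · left; right; rw [hax]; exact Set.mem_insert_of_mem _ rfl
          · left; left; exact ⟨ha, by rintro (rfl | rfl) <;> [exact hax rfl; exact hay rfl]⟩
      · left; right; exact Set.mem_insert _ _
    by_cases hp : p ∈ M₁.verts
    · obtain ⟨N, hNm, hNc, hNv⟩ := ih M₁ h1m hmeasure y p hy1 hyp hp
      refine ⟨N, hNm, by rw [hNc, h1card], ?_⟩
      intro a ha
      apply hNv
      have := hsubverts ha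
      rcases this with h | h
      · exact Or.inl h
      · exact Or.inr h
    · have hpG : G.Adj y p := hyp.adj_sub
      obtain ⟨hNm, hNv, hNe⟩ := sup_edge_matching h1m hpG hy1 hp
      refine ⟨M₁ ⊔ G.subgraphOfAdj hpG, hNm, ?_, ?_⟩
      · rw [hNe, Set.union_singleton, Set.ncard_insert_of_notMem ?_ (Set.toFinite _), h1card]
        intro h
        exact hp (M₁.edge_vert (Subgraph.mem_edgeSet.mp h).symm)
      · intro a ha
        rw [hNv]
        rcases hsubverts ha with h | h
        · exact Or.inl h
        · right; rw [h]; exact Set.mem_insert _ _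
end StmtAux


namespace StmtAux

lemma step {V : Type*} [Fintype V] {G : SimpleGraph V} {n : ℕ}
    (hν : 2 * (n + 1) + 2 ≤ Fintype.card V) (hext : Extendable G (n + 1)) :
    Extendable G n := by
  obtain ⟨hconn, ⟨M0, hM0, hM0c⟩, hextend⟩ := hext
  obtain ⟨F, -, hF⟩ := hextend M0 hM0 hM0c
  have hsize : HasMatchingOfSize G n := by
    have hne : M0.edgeSet.Nonempty := Set.nonempty_of_ncard_ne_zero (by omega)
    obtain ⟨e, he⟩ := hne
    induction e with
    | _ x y =>
      rw [Subgraph.mem_edgeSet] at he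
      obtain ⟨h2m, h2v, h2e⟩ := deleteVerts_matching hM0 he
      refine ⟨_, h2m, ?_⟩
      rw [h2e, Set.ncard_diff_singleton_of_mem (Subgraph.mem_edgeSet.mpr he),
        hM0c]
      omega
  refine ⟨hconn, hsize, ?_⟩
  intro M hM hMc
  by_cases hedge : ∃ u v, u ∉ M.verts ∧ v ∉ M.verts ∧ G.Adj u v
  · obtain ⟨u, v, hu, hv, huv⟩ := hedge
    obtain ⟨hNm, hNv, hNe⟩ := sup_edge_matching hM huv hu hv
    have hsc : (M ⊔ G.subgraphOfAdj huv).edgeSet.ncard = n + 1 := by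
      rw [hNe, Set.union_singleton, Set.ncard_insert_of_notMem ?_ (Set.toFinite _), hMc]
      intro h
      exact hu (M.edge_vert (Subgraph.mem_edgeSet.mp h))
    obtain ⟨F', hle, hF'⟩ := hextend _ hNm hsc
    exact ⟨F', le_trans le_sup_left hle, hF'⟩
  · exfalso
    push_neg at hedge
    have hMv : M.verts.ncard = 2 * n := matching_verts_ncard n M hM hMc
    have hzex : ∃ z, z ∉ M.verts := by
      by_contra h
      push_neg at h
      have huniv : M.verts = Set.univ := Set.eq_univ_of_forall h
      rw [huniv, Set.ncard_univ, Nat.card_eq_fintype_card] at hMv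
      omega
    obtain ⟨z, hz⟩ := hzex
    obtain ⟨x, hzx, -⟩ := hF.1 (hF.2 z)
    have hxM : x ∈ M.verts := by
      by_contra hxM
      exact hedge z x hz hxM hzx.adj_sub
    obtain ⟨N, hNm, hNc, hNv⟩ :=
      walk_lemma hF ((M.edgeSet \ F.edgeSet).ncard) M hM le_rfl z x hz hzx hxM
    rw [hMc] at hNc
    obtain ⟨F', hle, hF'⟩ := hextend N hNm hNc
    have hNvc : N.verts.ncard = 2 * (n + 1) := matching_verts_ncard _ N hNm hNc
    have hz'ex : ∃ z', z' ∉ N.verts := by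
      by_contra h
      push_neg at h
      have huniv : N.verts = Set.univ := Set.eq_univ_of_forall h
      rw [huniv, Set.ncard_univ, Nat.card_eq_fintype_card] at hNvc
      omega
    obtain ⟨z', hz'⟩ := hz'ex
    have hz'M : z' ∉ M.verts := fun h => hz' (hNv (Or.inl h))
    obtain ⟨w', hzw', -⟩ := hF'.1 (hF'.2 z')
    have hw'N : w' ∉ N.verts := by
      intro hw
      obtain ⟨u, hu, -⟩ := hNm hw
      have h1 : F'.Adj w' u := hle.2 hu
      have h2 : u = z' := (hF'.1 (hF'.2 w')).unique h1 hzw'.symm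
      exact hz' (h2 ▸ N.edge_vert hu.symm)
    have hw'M : w' ∉ M.verts := fun h => hw'N (hNv (Or.inl h))
    exact hedge z' w' hz'M hw'M hzw'.adj_sub

end StmtAux

/-- a `k`-extendable graph on `ν ≥ 2k+2` vertices is `m`-extendable for all `m ≤ k`. -/
theorem stmt4 {V : Type*} [Fintype V] (G : SimpleGraph V) (k : ℕ)
    (hν : 2 * k + 2 ≤ Fintype.card V) (hext : Extendable G k)
    (m : ℕ) (hm : m ≤ k) : Extendable G m := by
  have key : ∀ d, Extendable G (k - d) ∧ 2 * (k - d) + 2 ≤ Fintype.card V := by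
    intro d
    induction d with
    | zero => exact ⟨hext, hν⟩
    | succ d ih =>
      obtain ⟨h1, h2⟩ := ih
      by_cases hkd : k - d = 0
      · have h0 : k - (d + 1) = k - d := by omega
        rw [h0]
        exact ⟨h1, h2⟩
      · obtain ⟨j, hj⟩ : ∃ j, k - d = j + 1 := ⟨k - d - 1, by omega⟩
        have hkd1 : k - (d + 1) = j := by omega
        rw [hkd1]
        rw [hj] at h1 h2
        exact ⟨StmtAux.step h2 h1, by omega⟩
  have hkey := (key (k - m)).1
  have hkm : k - (k - m) = m := by omega
  rw [hkm] at hkey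
  exact hkey
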